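/- Let φ, ψ : ℝ² → ℝ be continuously differentiable. On the open set U = {(x, y, vx, vy) ∈ ℝ⁴ : x ≠ 0 and y ≠ 0} define the vector fields X1(x, y, vx, vy) = (vx, vy, ψ((x·vy − y·vx)², x/y)/(x²·y), φ((x·vy − y·vx)², x/y)/(x·y²)), X2(x, y, vx, vy) = (1/2)·(x, y, −vx, −vy), X3(x, y, vx, vy) = (0, 0, −x, −y), where the four components correspond to the coordinates (x, y, vx, vy). Then at every point of U the Lie brackets (computed within U) satisfy [X1, X2] = X1, [X1, X3] = 2·X2 and [X2, X3] = X3; in particular X1, X2, X3 span a Lie algebra of vector fields on U isomorphic to sl(2, ℝ). -/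

import Mathlib

open ContinuousLinearMap


/-- The Vessiot--Guldberg Lie algebra of the new class of generalized Ermakov
systems: on `U = {(x, y, vx, vy) : x ≠ 0 ∧ y ≠ 0} ⊆ ℝ⁴`, the vector fields
`X1, X2, X3` satisfy the `sl(2, ℝ)` commutation relations
`[X1, X2] = X1`, `[X1, X3] = 2 X2`, `[X2, X3] = X3`. -/
theorem generalized_ermakov_sl2_vessiot_guldberg
    (φ ψ : ℝ × ℝ → ℝ) (hφ : ContDiff ℝ 1 φ) (hψ : ContDiff ℝ 1 ψ) :
    let U : Set (ℝ × ℝ × ℝ × ℝ) := {p | p.1 ≠ 0 ∧ p.2.1 ≠ 0}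
    let X1 : ℝ × ℝ × ℝ × ℝ → ℝ × ℝ × ℝ × ℝ := fun p =>
      (p.2.2.1, p.2.2.2,
        ψ ((p.1 * p.2.2.2 - p.2.1 * p.2.2.1) ^ 2, p.1 / p.2.1) / (p.1 ^ 2 * p.2.1),
        φ ((p.1 * p.2.2.2 - p.2.1 * p.2.2.1) ^ 2, p.1 / p.2.1) / (p.1 * p.2.1 ^ 2))
    let X2 : ℝ × ℝ × ℝ × ℝ → ℝ × ℝ × ℝ × ℝ := fun p =>
      (1 / 2 : ℝ) • (p.1, p.2.1, -p.2.2.1, -p.2.2.2)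
    let X3 : ℝ × ℝ × ℝ × ℝ → ℝ × ℝ × ℝ × ℝ := fun p => (0, 0, -p.1, -p.2.1)
    ∀ p ∈ U,
      VectorField.lieBracketWithin ℝ X1 X2 U p = X1 p ∧
      VectorField.lieBracketWithin ℝ X1 X3 U p = (2 : ℝ) • X2 p ∧
      VectorField.lieBracketWithin ℝ X2 X3 U p = X3 p := by
  intro U X1 X2 X3 p hp
  obtain ⟨hx0, hy0⟩ := hp
  have hU : IsOpen U := by
    have : U = (Prod.fst ⁻¹' {(0:ℝ)}ᶜ) ∩ ((fun q : ℝ×ℝ×ℝ×ℝ => q.2.1) ⁻¹' {(0:ℝ)}ᶜ) := by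
      ext q; simp [U, Set.mem_setOf_eq]
    rw [this]
    exact (isOpen_compl_singleton.preimage continuous_fst).inter
      (isOpen_compl_singleton.preimage (continuous_fst.comp continuous_snd))
  have hpU : p ∈ U := ⟨hx0, hy0⟩
  -- basic derivatives
  have h22 : HasFDerivAt (fun q : ℝ × ℝ × ℝ × ℝ => q.2.2)
      ((snd ℝ ℝ (ℝ×ℝ)).comp (snd ℝ ℝ (ℝ×ℝ×ℝ))) p := hasFDerivAt_snd.comp p hasFDerivAt_snd
  have hx : HasFDerivAt (fun q : ℝ × ℝ × ℝ × ℝ => q.1) (fst ℝ ℝ (ℝ×ℝ×ℝ)) p := hasFDerivAt_fst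
  have hy : HasFDerivAt (fun q : ℝ × ℝ × ℝ × ℝ => q.2.1)
      ((fst ℝ ℝ (ℝ×ℝ)).comp (snd ℝ ℝ (ℝ×ℝ×ℝ))) p := hasFDerivAt_fst.comp p hasFDerivAt_snd
  have hvx : HasFDerivAt (fun q : ℝ × ℝ × ℝ × ℝ => q.2.2.1)
      ((fst ℝ ℝ ℝ).comp ((snd ℝ ℝ (ℝ×ℝ)).comp (snd ℝ ℝ (ℝ×ℝ×ℝ)))) p := hasFDerivAt_fst.comp p h22
  have hvy : HasFDerivAt (fun q : ℝ × ℝ × ℝ × ℝ => q.2.2.2)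
      ((snd ℝ ℝ ℝ).comp ((snd ℝ ℝ (ℝ×ℝ)).comp (snd ℝ ℝ (ℝ×ℝ×ℝ)))) p := hasFDerivAt_snd.comp p h22
  have hA := (hx.mul hvy).sub (hy.mul hvx)
  have hI := hA.mul hA
  have hyinv := (hasFDerivAt_inv hy0).comp p hy
  have hr := hx.mul hyinv
  have hG := hI.prodMk hr
  have hψd : DifferentiableAt ℝ ψ
      ((p.1 * p.2.2.2 - p.2.1 * p.2.2.1) * (p.1 * p.2.2.2 - p.2.1 * p.2.2.1), p.1 * p.2.1⁻¹) :=
    (hψ.differentiable one_ne_zero).differentiableAt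
  have hφd : DifferentiableAt ℝ φ
      ((p.1 * p.2.2.2 - p.2.1 * p.2.2.1) * (p.1 * p.2.2.2 - p.2.1 * p.2.2.1), p.1 * p.2.1⁻¹) :=
    (hφ.differentiable one_ne_zero).differentiableAt
  have hψG := hψd.hasFDerivAt.comp p hG
  have hφG := hφd.hasFDerivAt.comp p hG
  have hne3 : p.1 * p.1 * p.2.1 ≠ 0 := by simp [hx0, hy0]
  have hne4 : p.1 * (p.2.1 * p.2.1) ≠ 0 := by simp [hx0, hy0]
  have hinv3 := (hasFDerivAt_inv hne3).comp p ((hx.mul hx).mul hy)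
  have hinv4 := (hasFDerivAt_inv hne4).comp p (hx.mul (hy.mul hy))
  have hF3 := hψG.mul hinv3
  have hF4 := hφG.mul hinv4
  have hX1' := hvx.prodMk (hvy.prodMk (hF3.prodMk hF4))
  have hX2 := (hx.prodMk (hy.prodMk (hvx.neg.prodMk hvy.neg))).const_smul ((1:ℝ)/2)
  have hX3 := (hasFDerivAt_const (0:ℝ) p).prodMk ((hasFDerivAt_const (0:ℝ) p).prodMk (hx.neg.prodMk hy.neg))
  have eX1 : X1 = (fun q : ℝ × ℝ × ℝ × ℝ => (q.2.2.1, q.2.2.2,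
      ψ ((q.1 * q.2.2.2 - q.2.1 * q.2.2.1) * (q.1 * q.2.2.2 - q.2.1 * q.2.2.1), q.1 * q.2.1⁻¹) *
        (q.1 * q.1 * q.2.1)⁻¹,
      φ ((q.1 * q.2.2.2 - q.2.1 * q.2.2.1) * (q.1 * q.2.2.2 - q.2.1 * q.2.2.1), q.1 * q.2.1⁻¹) *
        (q.1 * (q.2.1 * q.2.1))⁻¹)) := by
    funext q
    simp only [X1, pow_two, div_eq_mul_inv]
  simp only [Function.comp_def] at hX1'
  simp only [VectorField.lieBracketWithin, fderivWithin_of_isOpen hU hpU, eX1]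
  rw [(show HasFDerivAt (fun q : ℝ × ℝ × ℝ × ℝ => (q.2.2.1, q.2.2.2,
      ψ ((q.1 * q.2.2.2 - q.2.1 * q.2.2.1) * (q.1 * q.2.2.2 - q.2.1 * q.2.2.1), q.1 * q.2.1⁻¹) *
        (q.1 * q.1 * q.2.1)⁻¹,
      φ ((q.1 * q.2.2.2 - q.2.1 * q.2.2.1) * (q.1 * q.2.2.2 - q.2.1 * q.2.2.1), q.1 * q.2.1⁻¹) *
        (q.1 * (q.2.1 * q.2.1))⁻¹)) _ p from hX1').fderiv, (show HasFDerivAt X2 _ p from hX2).fderiv,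
    (show HasFDerivAt X3 _ p from hX3).fderiv]
  refine ⟨?_, ?_, ?_⟩
  · simp only [ContinuousLinearMap.coe_comp', ContinuousLinearMap.coe_fst',
      ContinuousLinearMap.coe_snd', ContinuousLinearMap.prod_apply, ContinuousLinearMap.add_apply,
      ContinuousLinearMap.coe_smul', ContinuousLinearMap.sub_apply, Pi.smul_apply,
      Function.comp_apply, ContinuousLinearMap.smulRight_apply, ContinuousLinearMap.one_apply,
      ContinuousLinearMap.neg_apply, ContinuousLinearMap.zero_apply, smul_eq_mul, Prod.smul_mk,
      Pi.mul_apply, Pi.sub_apply, ContinuousLinearMap.toSpanSingleton_apply, X2, Prod.mk_sub_mk]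
    refine Prod.ext ?_ (Prod.ext ?_ (Prod.ext ?_ ?_))
    · ring
    · ring
    · rw [show ((p.1 * p.2.2.2 - p.2.1 * p.2.2.1) *
              (p.1 * (1 / 2 * -p.2.2.2) + p.2.2.2 * (1 / 2 * p.1) -
                (p.2.1 * (1 / 2 * -p.2.2.1) + p.2.2.1 * (1 / 2 * p.2.1))) +
            (p.1 * p.2.2.2 - p.2.1 * p.2.2.1) *
              (p.1 * (1 / 2 * -p.2.2.2) + p.2.2.2 * (1 / 2 * p.1) -
                (p.2.1 * (1 / 2 * -p.2.2.1) + p.2.2.1 * (1 / 2 * p.2.1))),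
          p.1 * (1 / 2 * p.2.1 * -(p.2.1 ^ 2)⁻¹) + p.2.1⁻¹ * (1 / 2 * p.1)) = ((0:ℝ), (0:ℝ)) from by
        simp only [Prod.mk.injEq]
        constructor
        · ring
        · field_simp
          ring]
      simp only [Prod.mk_zero_zero, map_zero]
      field_simp
      ring
    · rw [show ((p.1 * p.2.2.2 - p.2.1 * p.2.2.1) *
              (p.1 * (1 / 2 * -p.2.2.2) + p.2.2.2 * (1 / 2 * p.1) -
                (p.2.1 * (1 / 2 * -p.2.2.1) + p.2.2.1 * (1 / 2 * p.2.1))) +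
            (p.1 * p.2.2.2 - p.2.1 * p.2.2.1) *
              (p.1 * (1 / 2 * -p.2.2.2) + p.2.2.2 * (1 / 2 * p.1) -
                (p.2.1 * (1 / 2 * -p.2.2.1) + p.2.2.1 * (1 / 2 * p.2.1))),
          p.1 * (1 / 2 * p.2.1 * -(p.2.1 ^ 2)⁻¹) + p.2.1⁻¹ * (1 / 2 * p.1)) = ((0:ℝ), (0:ℝ)) from by
        simp only [Prod.mk.injEq]
        constructor
        · ring
        · field_simp
          ring]
      simp only [Prod.mk_zero_zero, map_zero]
      field_simp
      ring
  · simp only [ContinuousLinearMap.coe_comp', ContinuousLinearMap.coe_fst',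
      ContinuousLinearMap.coe_snd', ContinuousLinearMap.prod_apply, ContinuousLinearMap.add_apply,
      ContinuousLinearMap.coe_smul', ContinuousLinearMap.sub_apply, Pi.smul_apply,
      Function.comp_apply, ContinuousLinearMap.smulRight_apply, ContinuousLinearMap.one_apply,
      ContinuousLinearMap.neg_apply, ContinuousLinearMap.zero_apply, smul_eq_mul, Prod.smul_mk,
      Pi.mul_apply, Pi.sub_apply, ContinuousLinearMap.toSpanSingleton_apply, X2, X3, Prod.mk_sub_mk]
    refine Prod.ext ?_ (Prod.ext ?_ (Prod.ext ?_ ?_))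
    · ring
    · ring
    · rw [show ((p.1 * p.2.2.2 - p.2.1 * p.2.2.1) * (p.1 * -p.2.1 + p.2.2.2 * 0 - (p.2.1 * -p.1 + p.2.2.1 * 0)) +
            (p.1 * p.2.2.2 - p.2.1 * p.2.2.1) * (p.1 * -p.2.1 + p.2.2.2 * 0 - (p.2.1 * -p.1 + p.2.2.1 * 0)),
          p.1 * (0 * -(p.2.1 ^ 2)⁻¹) + p.2.1⁻¹ * 0) = ((0:ℝ), (0:ℝ)) from by
        simp only [Prod.mk.injEq]
        constructor
        · ring
        · ring]
      simp only [Prod.mk_zero_zero, map_zero]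
      ring
    · rw [show ((p.1 * p.2.2.2 - p.2.1 * p.2.2.1) * (p.1 * -p.2.1 + p.2.2.2 * 0 - (p.2.1 * -p.1 + p.2.2.1 * 0)) +
            (p.1 * p.2.2.2 - p.2.1 * p.2.2.1) * (p.1 * -p.2.1 + p.2.2.2 * 0 - (p.2.1 * -p.1 + p.2.2.1 * 0)),
          p.1 * (0 * -(p.2.1 ^ 2)⁻¹) + p.2.1⁻¹ * 0) = ((0:ℝ), (0:ℝ)) from by
        simp only [Prod.mk.injEq]
        constructor
        · ring
        · ring]
      simp only [Prod.mk_zero_zero, map_zero]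
      ring
  · simp only [ContinuousLinearMap.coe_comp', ContinuousLinearMap.coe_fst',
      ContinuousLinearMap.coe_snd', ContinuousLinearMap.prod_apply, ContinuousLinearMap.add_apply,
      ContinuousLinearMap.coe_smul', ContinuousLinearMap.sub_apply, Pi.smul_apply,
      Function.comp_apply, ContinuousLinearMap.smulRight_apply, ContinuousLinearMap.one_apply,
      ContinuousLinearMap.neg_apply, ContinuousLinearMap.zero_apply, smul_eq_mul, Prod.smul_mk,
      Pi.mul_apply, Pi.sub_apply, ContinuousLinearMap.toSpanSingleton_apply,
      X2, X3, Prod.mk_sub_mk]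
    refine Prod.ext ?_ (Prod.ext ?_ (Prod.ext ?_ ?_)) <;> ring
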